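/- (AGM bound) Let H = (V, E) be a hypergraph with a finite relation R_F over each hyperedge F ∈ E, and let u : E → ℝ_{≥0} be a fractional edge cover of V. Then the join ⋈_{F∈E} R_F is finite and |⋈_{F∈E} R_F| ≤ ∏_{F ∈ E} |R_F|^{u_F}. -/

import Mathlib

open Finset in
lemma holder_sum {ι α : Type*} (s : Finset ι) (t : Finset α) (w : ι → ℝ) (f : ι → α → ℝ)
    (hw : ∀ i ∈ s, 0 ≤ w i) (hw1 : 1 ≤ ∑ i ∈ s, w i)
    (hf : ∀ i ∈ s, ∀ a ∈ t, 0 ≤ f i a) :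
    ∑ a ∈ t, ∏ i ∈ s, f i a ^ w i ≤ ∏ i ∈ s, (∑ a ∈ t, f i a) ^ w i := by
  classical
  set s' : Finset ι := s.filter (fun i => 0 < w i) with hs'
  have hsub : s' ⊆ s := filter_subset _ _
  have hws' : ∀ i ∈ s', 0 < w i := fun i hi => (mem_filter.1 hi).2
  have hprod : ∀ (g : ι → ℝ), ∏ i ∈ s, g i ^ w i = ∏ i ∈ s', g i ^ w i := by
    intro g
    refine (Finset.prod_subset hsub ?_).symm
    intro i hi hni
    have : w i = 0 := by
      by_contra h
      exact hni (Finset.mem_filter.2 ⟨hi, (hw i hi).lt_of_ne (Ne.symm h)⟩)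
    rw [this, Real.rpow_zero]
  have hwsum : ∑ i ∈ s', w i = ∑ i ∈ s, w i := by
    refine Finset.sum_subset hsub ?_
    intro i hi hni
    by_contra h
    exact hni (mem_filter.2 ⟨hi, lt_of_le_of_ne (hw i hi) (Ne.symm h)⟩)
  simp only [hprod]
  set S : ι → ℝ := fun i => ∑ a ∈ t, f i a with hS
  have hS0 : ∀ i ∈ s', 0 ≤ S i := fun i hi => Finset.sum_nonneg fun a ha => hf i (hsub hi) a ha
  by_cases hz : ∃ i ∈ s', S i = 0
  · obtain ⟨i₀, hi₀, hSi₀⟩ := hz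
    have hf0 : ∀ a ∈ t, f i₀ a = 0 := by
      intro a ha
      have := (Finset.sum_eq_zero_iff_of_nonneg (fun a ha => hf i₀ (hsub hi₀) a ha)).1 hSi₀
      exact this a ha
    have hL : ∑ a ∈ t, ∏ i ∈ s', f i a ^ w i = 0 := by
      refine Finset.sum_eq_zero fun a ha => ?_
      refine Finset.prod_eq_zero hi₀ ?_
      rw [hf0 a ha, Real.zero_rpow (ne_of_gt (hws' i₀ hi₀))]
    have hR : ∏ i ∈ s', S i ^ w i = 0 := by
      refine Finset.prod_eq_zero hi₀ ?_
      rw [hSi₀, Real.zero_rpow (ne_of_gt (hws' i₀ hi₀))]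
    rw [hL, hR]
  · push_neg at hz
    have hSpos : ∀ i ∈ s', 0 < S i := fun i hi => lt_of_le_of_ne (hS0 i hi) (Ne.symm (hz i hi))
    set c : ℝ := ∑ i ∈ s', w i with hc
    have hc1 : 1 ≤ c := by rw [hwsum]; exact hw1
    have hcpos : 0 < c := lt_of_lt_of_le one_pos hc1
    have key : ∀ a ∈ t, ∏ i ∈ s', f i a ^ w i
        ≤ (∏ i ∈ s', S i ^ w i) * ∑ i ∈ s', (w i / c) * (f i a / S i) := by
      intro a ha
      have hfa : ∀ i ∈ s', 0 ≤ f i a := fun i hi => hf i (hsub hi) a ha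
      have hfS : ∀ i ∈ s', f i a / S i ≤ 1 := by
        intro i hi
        rw [div_le_one (hSpos i hi)]
        exact Finset.single_le_sum (fun b hb => hf i (hsub hi) b hb) ha
      have hfS0 : ∀ i ∈ s', 0 ≤ f i a / S i := fun i hi =>
        div_nonneg (hfa i hi) (hS0 i hi)
      set G : ℝ := ∏ i ∈ s', (f i a / S i) ^ (w i / c) with hG
      have hG0 : 0 ≤ G := Finset.prod_nonneg fun i hi => Real.rpow_nonneg (hfS0 i hi) _
      have hGle : G ≤ ∑ i ∈ s', (w i / c) * (f i a / S i) := by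
        refine Real.geom_mean_le_arith_mean_weighted s' _ _
          (fun i hi => div_nonneg (hw i (hsub hi)) hcpos.le) ?_ hfS0
        · rw [← Finset.sum_div, ← hc, div_self (ne_of_gt hcpos)]
      have hG1 : ∑ i ∈ s', (w i / c) * (f i a / S i) ≤ 1 := by
        calc ∑ i ∈ s', (w i / c) * (f i a / S i) ≤ ∑ i ∈ s', (w i / c) * 1 := by
              refine Finset.sum_le_sum fun i hi => ?_
              exact mul_le_mul_of_nonneg_left (hfS i hi) (div_nonneg (hw i (hsub hi)) hcpos.le)
          _ = 1 := by
              simp only [mul_one, ← Finset.sum_div, ← hc, div_self (ne_of_gt hcpos)]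
      have hGc : G ^ c = ∏ i ∈ s', (f i a / S i) ^ w i := by
        rw [hG, ← Real.finset_prod_rpow s' _ (fun i hi => Real.rpow_nonneg (hfS0 i hi) _) c]
        refine Finset.prod_congr rfl fun i hi => ?_
        rw [← Real.rpow_mul (hfS0 i hi), div_mul_cancel₀ _ (ne_of_gt hcpos)]
      have hGcle : G ^ c ≤ ∑ i ∈ s', (w i / c) * (f i a / S i) := by
        rcases eq_or_lt_of_le hG0 with hG0' | hG0'
        · rw [← hG0', Real.zero_rpow (ne_of_gt hcpos)]
          exact Finset.sum_nonneg fun i hi =>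
            mul_nonneg (div_nonneg (hw i (hsub hi)) hcpos.le) (hfS0 i hi)
        · calc G ^ c ≤ G ^ (1 : ℝ) :=
                Real.rpow_le_rpow_of_exponent_ge hG0' (hGle.trans hG1) hc1
            _ = G := Real.rpow_one G
            _ ≤ _ := hGle
      calc ∏ i ∈ s', f i a ^ w i = ∏ i ∈ s', (S i * (f i a / S i)) ^ w i := by
            refine Finset.prod_congr rfl fun i hi => ?_
            rw [mul_div_cancel₀ _ (ne_of_gt (hSpos i hi))]
        _ = (∏ i ∈ s', S i ^ w i) * ∏ i ∈ s', (f i a / S i) ^ w i := by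
            rw [← Finset.prod_mul_distrib]
            exact Finset.prod_congr rfl fun i hi =>
              Real.mul_rpow (hS0 i hi) (hfS0 i hi)
        _ = (∏ i ∈ s', S i ^ w i) * G ^ c := by rw [hGc]
        _ ≤ _ := by
            refine mul_le_mul_of_nonneg_left hGcle ?_
            exact Finset.prod_nonneg fun i hi => Real.rpow_nonneg (hS0 i hi) _
    calc ∑ a ∈ t, ∏ i ∈ s', f i a ^ w i
        ≤ ∑ a ∈ t, (∏ i ∈ s', S i ^ w i) * ∑ i ∈ s', (w i / c) * (f i a / S i) :=
          Finset.sum_le_sum key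
      _ = (∏ i ∈ s', S i ^ w i) * ∑ i ∈ s', (w i / c) * (S i / S i) := by
          rw [← Finset.mul_sum, Finset.sum_comm]
          congr 1
          refine Finset.sum_congr rfl fun i hi => ?_
          rw [← Finset.mul_sum, ← Finset.sum_div]
      _ = ∏ i ∈ s', S i ^ w i := by
          have : ∑ i ∈ s', (w i / c) * (S i / S i) = 1 := by
            have : ∀ i ∈ s', (w i / c) * (S i / S i) = w i / c := fun i hi => by
              rw [div_self (ne_of_gt (hSpos i hi)), mul_one]
            rw [Finset.sum_congr rfl this, ← Finset.sum_div, ← hc, div_self (ne_of_gt hcpos)]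
          rw [this, mul_one]


lemma ncard_biUnion_le' {α β : Type*} (s : Finset α) (f : α → Set β)
    (hf : ∀ a ∈ s, (f a).Finite) :
    (⋃ a ∈ s, f a).ncard ≤ ∑ a ∈ s, (f a).ncard := by
  classical
  induction s using Finset.induction with
  | empty => simp
  | insert _ _ ha ih =>
    rename_i b s
    rw [Finset.sum_insert ha]
    have h1 : (⋃ a ∈ insert b s, f a) = f b ∪ ⋃ a ∈ s, f a := by
      simp [Set.biUnion_insert]
    rw [h1]
    exact (Set.ncard_union_le _ _).trans
      (add_le_add_right (ih fun a has => hf a (Finset.mem_insert_of_mem has)) _)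

section AGM

variable {V : Type*} [Fintype V] [DecidableEq V] {D : V → Type*}

/-- The join with coordinates outside `A` frozen to `τ`. -/
def Jset (E : Finset (Finset V)) (R : (F : Finset V) → Set ((x : F) → D x.1))
    (A : Finset V) (τ : ∀ x, D x) : Set (∀ x, D x) :=
  {t | (∀ x, x ∉ A → t x = τ x) ∧ ∀ F ∈ E, (fun x : F => t x.1) ∈ R F}

/-- The tuples of `R F` matching `τ` outside `A`. -/
def Cset (R : (F : Finset V) → Set ((x : F) → D x.1)) (F A : Finset V) (τ : ∀ x, D x) :
    Set ((x : F) → D x.1) :=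
  {r | r ∈ R F ∧ ∀ x : F, x.1 ∉ A → r x = τ x.1}

lemma agm_aux (E : Finset (Finset V))
    (hcover : ∀ x : V, ∃ F ∈ E, x ∈ F)
    (R : (F : Finset V) → Set ((x : F) → D x.1))
    (hRfin : ∀ F ∈ E, (R F).Finite)
    (u : Finset V → ℝ)
    (hu0 : ∀ F ∈ E, 0 ≤ u F)
    (hucov : ∀ x : V, 1 ≤ ∑ F ∈ E, if x ∈ F then u F else 0)
    (A : Finset V) :
    ∀ τ : ∀ x, D x, (Jset E R A τ).Finite ∧
      ((Jset E R A τ).ncard : ℝ) ≤ ∏ F ∈ E, ((Cset R F A τ).ncard : ℝ) ^ u F := by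
  classical
  induction A using Finset.strongInductionOn with
  | _ A ih =>
  intro τ
  have hCfin : ∀ F ∈ E, ∀ (B : Finset V) (σ : ∀ x, D x), (Cset R F B σ).Finite :=
    fun F hFE B σ => (hRfin F hFE).subset fun r hr => hr.1
  have hRHS0 : ∀ (B : Finset V) (σ : ∀ x, D x),
      0 ≤ ∏ F ∈ E, ((Cset R F B σ).ncard : ℝ) ^ u F :=
    fun B σ => Finset.prod_nonneg fun F hF => Real.rpow_nonneg (Nat.cast_nonneg _) _
  rcases A.eq_empty_or_nonempty with rfl | ⟨x, hxA⟩
  · -- base case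
    have hJsub : Jset E R ∅ τ ⊆ {τ} := by
      intro t ht
      have : t = τ := funext fun y => ht.1 y (Finset.notMem_empty y)
      simp [this]
    have hJfin : (Jset E R ∅ τ).Finite := (Set.finite_singleton τ).subset hJsub
    refine ⟨hJfin, ?_⟩
    rcases Set.eq_empty_or_nonempty (Jset E R ∅ τ) with hJe | ⟨t, htJ⟩
    · rw [hJe]; simpa using hRHS0 ∅ τ
    · have htτ : t = τ := funext fun y => htJ.1 y (Finset.notMem_empty y)
      have hτJ : (∀ F ∈ E, (fun x : F => τ x.1) ∈ R F) := by
        intro F hF; have := htJ.2 F hF; rwa [htτ] at this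
      have hcard : (Jset E R ∅ τ).ncard ≤ 1 := by
        have := Set.ncard_le_ncard hJsub (Set.finite_singleton τ)
        simpa using this
      have h1 : ∀ F ∈ E, (1 : ℝ) ≤ ((Cset R F ∅ τ).ncard : ℝ) ^ u F := by
        intro F hF
        have hne : (Cset R F ∅ τ).Nonempty :=
          ⟨fun x : F => τ x.1, hτJ F hF, fun x hx => rfl⟩
        have hpos : 0 < (Cset R F ∅ τ).ncard :=
          (Set.ncard_pos (hCfin F hF ∅ τ)).2 hne
        have : (1 : ℝ) ≤ ((Cset R F ∅ τ).ncard : ℝ) := by exact_mod_cast hpos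
        calc (1 : ℝ) = (1 : ℝ) ^ u F := (Real.one_rpow _).symm
          _ ≤ _ := Real.rpow_le_rpow zero_le_one this (hu0 F hF)
      calc ((Jset E R ∅ τ).ncard : ℝ) ≤ 1 := by exact_mod_cast hcard
        _ = ∏ F ∈ E, (1 : ℝ) := by simp
        _ ≤ _ := Finset.prod_le_prod (by intros; exact zero_le_one) h1
  · -- inductive step
    obtain ⟨F₀, hF₀E, hxF₀⟩ := hcover x
    set A' : Finset V := A.erase x with hA'def
    have hA' : A' ⊂ A := Finset.erase_ssubset hxA
    have hVfin : ((fun r : (y : F₀) → D y.1 => r ⟨x, hxF₀⟩) '' R F₀).Finite :=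
      (hRfin F₀ hF₀E).image _
    set Val : Finset (D x) := hVfin.toFinset with hValdef
    have hsub : Jset E R A τ ⊆ ⋃ a ∈ Val, Jset E R A' (Function.update τ x a) := by
      intro t ht
      have hmem : t x ∈ Val := by
        rw [hValdef, Set.Finite.mem_toFinset]
        exact ⟨_, ht.2 F₀ hF₀E, rfl⟩
      refine Set.mem_biUnion hmem ⟨?_, ht.2⟩
      intro y hy
      by_cases hyx : y = x
      · subst hyx; rw [Function.update_self]
      · have hyA : y ∉ A := fun h => hy (Finset.mem_erase.2 ⟨hyx, h⟩)
        rw [ht.1 y hyA, Function.update_of_ne hyx]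
    have hfinU : ∀ a ∈ Val, (Jset E R A' (Function.update τ x a)).Finite :=
      fun a _ => (ih A' hA' (Function.update τ x a)).1
    have hJfin : (Jset E R A τ).Finite :=
      (Set.Finite.biUnion Val.finite_toSet hfinU).subset hsub
    refine ⟨hJfin, ?_⟩
    -- counting
    have hstep1 : (Jset E R A τ).ncard
        ≤ ∑ a ∈ Val, (Jset E R A' (Function.update τ x a)).ncard := by
      refine le_trans (Set.ncard_le_ncard hsub (Set.Finite.biUnion Val.finite_toSet hfinU)) ?_
      exact ncard_biUnion_le' Val _ hfinU
    have hstep2 : ∀ a ∈ Val, ((Jset E R A' (Function.update τ x a)).ncard : ℝ)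
        ≤ ∏ F ∈ E, ((Cset R F A' (Function.update τ x a)).ncard : ℝ) ^ u F :=
      fun a _ => (ih A' hA' (Function.update τ x a)).2
    -- relations not containing x are unchanged
    have heq_out : ∀ F ∈ E, x ∉ F → ∀ a : D x,
        Cset R F A' (Function.update τ x a) = Cset R F A τ := by
      intro F hFE hxF a
      ext r
      simp only [Cset, Set.mem_setOf_eq]
      refine and_congr_right fun _ => ?_
      constructor
      · intro h y hyA
        have hyx : y.1 ≠ x := fun e => hxF (e ▸ y.2)
        have : y.1 ∉ A' := fun hh => hyA (Finset.mem_of_mem_erase hh)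
        rw [h y this, Function.update_of_ne hyx]
      · intro h y hyA'
        have hyx : y.1 ≠ x := fun e => hxF (e ▸ y.2)
        have hyA : y.1 ∉ A := fun hh => hyA' (Finset.mem_erase.2 ⟨hyx, hh⟩)
        rw [h y hyA, Function.update_of_ne hyx]
    -- relations containing x: the pieces are disjoint subsets
    have hsum_le : ∀ F ∈ E, x ∈ F →
        ∑ a ∈ Val, (Cset R F A' (Function.update τ x a)).ncard
          ≤ (Cset R F A τ).ncard := by
      intro F hFE hxF
      set g : D x → Finset ((y : F) → D y.1) :=
        fun a => (hCfin F hFE A' (Function.update τ x a)).toFinset with hgdef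
      have hcard : ∀ a, (Cset R F A' (Function.update τ x a)).ncard = (g a).card := by
        intro a
        rw [hgdef, Set.ncard_eq_toFinset_card _ (hCfin F hFE A' (Function.update τ x a))]
      have hdisj : ∀ a ∈ Val, ∀ b ∈ Val, a ≠ b → Disjoint (g a) (g b) := by
        intro a _ b _ hab
        rw [Finset.disjoint_left]
        intro r hra hrb
        rw [hgdef, Set.Finite.mem_toFinset] at hra hrb
        have hxA' : x ∉ A' := Finset.notMem_erase x A
        have h1 : r ⟨x, hxF⟩ = Function.update τ x a x := hra.2 ⟨x, hxF⟩ hxA'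
        have h2 : r ⟨x, hxF⟩ = Function.update τ x b x := hrb.2 ⟨x, hxF⟩ hxA'
        rw [Function.update_self] at h1 h2
        exact hab (h1 ▸ h2 ▸ rfl)
      have hsubT : Val.biUnion g ⊆ (hCfin F hFE A τ).toFinset := by
        intro r hr
        rw [Finset.mem_biUnion] at hr
        obtain ⟨a, _, hra⟩ := hr
        rw [hgdef, Set.Finite.mem_toFinset] at hra
        rw [Set.Finite.mem_toFinset]
        refine ⟨hra.1, ?_⟩
        intro y hyA
        have hyx : y.1 ≠ x := fun e => hyA (e ▸ hxA)
        have hyA' : y.1 ∉ A' := fun hh => hyA (Finset.mem_of_mem_erase hh)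
        rw [hra.2 y hyA', Function.update_of_ne hyx]
      calc ∑ a ∈ Val, (Cset R F A' (Function.update τ x a)).ncard
          = ∑ a ∈ Val, (g a).card := Finset.sum_congr rfl fun a _ => hcard a
        _ = (Val.biUnion g).card := (Finset.card_biUnion hdisj).symm
        _ ≤ ((hCfin F hFE A τ).toFinset).card := Finset.card_le_card hsubT
        _ = (Cset R F A τ).ncard := (Set.ncard_eq_toFinset_card _ (hCfin F hFE A τ)).symm
    -- Hölder over the edges containing x
    set Ex : Finset (Finset V) := E.filter (fun F => x ∈ F) with hExdef
    have hcovx : 1 ≤ ∑ F ∈ Ex, u F := by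
      rw [hExdef, Finset.sum_filter]
      exact hucov x
    set K : ℝ := ∏ F ∈ E.filter (fun F => x ∉ F), ((Cset R F A τ).ncard : ℝ) ^ u F with hKdef
    have hK0 : 0 ≤ K :=
      Finset.prod_nonneg fun F _ => Real.rpow_nonneg (Nat.cast_nonneg _) _
    have key : ∑ a ∈ Val, ∏ F ∈ E, ((Cset R F A' (Function.update τ x a)).ncard : ℝ) ^ u F
        ≤ ∏ F ∈ E, ((Cset R F A τ).ncard : ℝ) ^ u F := by
      have hsplit : ∀ a ∈ Val,
          ∏ F ∈ E, ((Cset R F A' (Function.update τ x a)).ncard : ℝ) ^ u F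
            = (∏ F ∈ Ex, ((Cset R F A' (Function.update τ x a)).ncard : ℝ) ^ u F) * K := by
        intro a _
        rw [← Finset.prod_filter_mul_prod_filter_not E (fun F => x ∈ F)]
        congr 1
        rw [hKdef]
        refine Finset.prod_congr rfl fun F hF => ?_
        rw [Finset.mem_filter] at hF
        rw [heq_out F hF.1 hF.2 a]
      calc ∑ a ∈ Val, ∏ F ∈ E, ((Cset R F A' (Function.update τ x a)).ncard : ℝ) ^ u F
          = (∑ a ∈ Val, ∏ F ∈ Ex, ((Cset R F A' (Function.update τ x a)).ncard : ℝ) ^ u F) * K := by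
            rw [Finset.sum_mul]
            exact Finset.sum_congr rfl hsplit
        _ ≤ (∏ F ∈ Ex, (∑ a ∈ Val, ((Cset R F A' (Function.update τ x a)).ncard : ℝ)) ^ u F) * K := by
            refine mul_le_mul_of_nonneg_right ?_ hK0
            refine holder_sum Ex Val u _ (fun F hF => hu0 F (Finset.mem_filter.1 hF).1)
              hcovx (fun F _ a _ => Nat.cast_nonneg _)
        _ ≤ (∏ F ∈ Ex, ((Cset R F A τ).ncard : ℝ) ^ u F) * K := by
            refine mul_le_mul_of_nonneg_right ?_ hK0
            refine Finset.prod_le_prod (fun F _ => Real.rpow_nonneg ?_ _) (fun F hF => ?_)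
            · exact Finset.sum_nonneg fun a _ => Nat.cast_nonneg _
            · rw [Finset.mem_filter] at hF
              refine Real.rpow_le_rpow (Finset.sum_nonneg fun a _ => Nat.cast_nonneg _)
                ?_ (hu0 F hF.1)
              rw [← Nat.cast_sum]
              exact_mod_cast hsum_le F hF.1 hF.2
        _ = ∏ F ∈ E, ((Cset R F A τ).ncard : ℝ) ^ u F := by
            rw [hKdef, Finset.prod_filter_mul_prod_filter_not]
    calc ((Jset E R A τ).ncard : ℝ)
        ≤ ∑ a ∈ Val, ((Jset E R A' (Function.update τ x a)).ncard : ℝ) := by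
          exact_mod_cast hstep1
      _ ≤ ∑ a ∈ Val, ∏ F ∈ E, ((Cset R F A' (Function.update τ x a)).ncard : ℝ) ^ u F :=
          Finset.sum_le_sum hstep2
      _ ≤ _ := key

end AGM

theorem stmt4 {V : Type*} [Fintype V] [DecidableEq V]
    (D : V → Type*)
    (E : Finset (Finset V))
    (hcover : ∀ x : V, ∃ F ∈ E, x ∈ F)
    (R : (F : Finset V) → Set ((x : F) → D x.1))
    (hRfin : ∀ F ∈ E, (R F).Finite)
    (u : Finset V → ℝ)
    (hu0 : ∀ F ∈ E, 0 ≤ u F)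
    (hucov : ∀ x : V, 1 ≤ ∑ F ∈ E, if x ∈ F then u F else 0) :
    {t : (x : V) → D x | ∀ F ∈ E, (fun x : F => t x.1) ∈ R F}.Finite ∧
    (({t : (x : V) → D x | ∀ F ∈ E, (fun x : F => t x.1) ∈ R F}).ncard : ℝ)
      ≤ ∏ F ∈ E, ((R F).ncard : ℝ) ^ (u F) := by
  classical
  by_cases hDne : ∀ x : V, Nonempty (D x)
  · have τ : ∀ x, D x := fun x => (hDne x).some
    obtain ⟨hfin, hle⟩ := agm_aux E hcover R hRfin u hu0 hucov Finset.univ τ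
    have hJ : Jset E R Finset.univ τ = {t : (x : V) → D x | ∀ F ∈ E, (fun x : F => t x.1) ∈ R F} := by
      ext t; simp [Jset]
    have hC : ∀ F ∈ E, Cset R F Finset.univ τ = R F := by
      intro F hF; ext r; simp [Cset]
    rw [hJ] at hfin hle
    refine ⟨hfin, hle.trans_eq ?_⟩
    exact Finset.prod_congr rfl fun F hF => by rw [hC F hF]
  · push_neg at hDne
    obtain ⟨x₀, hx₀⟩ := hDne
    have hEmp : IsEmpty ((x : V) → D x) :=
      ⟨fun t => hx₀.false (t x₀)⟩
    have h0 : {t : (x : V) → D x | ∀ F ∈ E, (fun x : F => t x.1) ∈ R F} = ∅ :=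
      Set.eq_empty_of_isEmpty _
    rw [h0]
    refine ⟨Set.finite_empty, ?_⟩
    simpa using Finset.prod_nonneg fun F hF => Real.rpow_nonneg (Nat.cast_nonneg _) (u F)
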